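/- Let ρ_τ(x) = x²(τ − 1{x<0}) (with the convention that the loss is x²·τ for x ≥ 0 and x²·(1−τ) for x < 0), and let W ~ N(0, σ²). Then E[ρ_τ(ξ − W)] = (2τ−1)ξ²Φ(ξ;0,σ²) + (2τ−1)σ² ξ φ(ξ;0,σ²) + (2τ−1)σ² Φ(ξ;0,σ²) + (1−τ)(ξ² + σ²), for any real ξ. -/

import Mathlib

open MeasureTheory Real Filter Set

/-- The `N(0, σ²)` density. -/
noncomputable def gpdf (s2 x : ℝ) : ℝ :=
  (Real.sqrt (2 * Real.pi * s2))⁻¹ * Real.exp (-(x ^ 2) / (2 * s2))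

/-- The `N(0, σ²)` cumulative distribution function. -/
noncomputable def gcdf (s2 x : ℝ) : ℝ := ∫ t in Set.Iic x, gpdf s2 t

/-- The expectile-regression asymmetric squared loss: `x²·τ` for `x ≥ 0` and
`x²·(1−τ)` for `x < 0`. -/
noncomputable def expectileLoss (τ x : ℝ) : ℝ := x ^ 2 * (if x < 0 then 1 - τ else τ)

/- ### Auxiliary lemmas -/

lemma sq_exp_le {b : ℝ} (hb : 0 < b) (x : ℝ) :
    x ^ 2 * Real.exp (-b * x ^ 2) ≤ 2 / b * Real.exp (-(b / 2) * x ^ 2) := by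
  have h1 : b / 2 * x ^ 2 ≤ Real.exp (b / 2 * x ^ 2) := by
    linarith [Real.add_one_le_exp (b / 2 * x ^ 2)]
  have h2 : x ^ 2 ≤ 2 / b * Real.exp (b / 2 * x ^ 2) := by
    rw [div_mul_eq_mul_div, le_div_iff₀ hb]
    nlinarith
  calc x ^ 2 * Real.exp (-b * x ^ 2)
      ≤ 2 / b * Real.exp (b / 2 * x ^ 2) * Real.exp (-b * x ^ 2) :=
        mul_le_mul_of_nonneg_right h2 (Real.exp_pos _).le
    _ = 2 / b * Real.exp (-(b / 2) * x ^ 2) := by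
        rw [mul_assoc, ← Real.exp_add]
        congr 2
        ring

lemma integrable_sq_mul_exp {b : ℝ} (hb : 0 < b) :
    Integrable fun x : ℝ => x ^ 2 * Real.exp (-b * x ^ 2) := by
  refine Integrable.mono' ((integrable_exp_neg_mul_sq (half_pos hb)).const_mul (2 / b))
    ?_ (Filter.Eventually.of_forall fun x => ?_)
  · exact ((continuous_pow 2).mul
      (Real.continuous_exp.comp (continuous_const.mul (continuous_pow 2)))).aestronglyMeasurable
  · rw [Real.norm_eq_abs, abs_of_nonneg (by positivity)]
    exact sq_exp_le hb x

lemma integrable_id_mul_exp {b : ℝ} (hb : 0 < b) :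
    Integrable fun x : ℝ => x * Real.exp (-b * x ^ 2) := by
  refine Integrable.mono' ((integrable_exp_neg_mul_sq hb).add (integrable_sq_mul_exp hb))
    ?_ (Filter.Eventually.of_forall fun x => ?_)
  · exact (continuous_id.mul
      (Real.continuous_exp.comp (continuous_const.mul (continuous_pow 2)))).aestronglyMeasurable
  · simp only [Pi.add_apply]
    rw [Real.norm_eq_abs, abs_mul, abs_of_nonneg (Real.exp_pos _).le]
    have h1 : |x| ≤ 1 + x ^ 2 := by nlinarith [sq_nonneg (|x| - 1), abs_nonneg x, sq_abs x]
    have h2 := mul_le_mul_of_nonneg_right h1 (Real.exp_pos (-b * x ^ 2)).le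
    have h3 : (1 + x ^ 2) * Real.exp (-b * x ^ 2)
        = Real.exp (-b * x ^ 2) + x ^ 2 * Real.exp (-b * x ^ 2) := by ring
    linarith

lemma tendsto_exp_neg_sq_atTop {b : ℝ} (hb : 0 < b) :
    Tendsto (fun x : ℝ => Real.exp (-b * x ^ 2)) atTop (nhds 0) := by
  have h0 : Tendsto (fun x : ℝ => b * x ^ 2) atTop atTop :=
    (tendsto_pow_atTop (two_ne_zero)).const_mul_atTop hb
  have h : Tendsto (fun x : ℝ => -b * x ^ 2) atTop atBot := by
    have := tendsto_neg_atTop_atBot.comp h0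
    refine this.congr fun x => ?_
    simp [Function.comp, neg_mul]
  exact Real.tendsto_exp_atBot.comp h

lemma tendsto_exp_neg_sq_atBot {b : ℝ} (hb : 0 < b) :
    Tendsto (fun x : ℝ => Real.exp (-b * x ^ 2)) atBot (nhds 0) := by
  have := (tendsto_exp_neg_sq_atTop hb).comp tendsto_neg_atBot_atTop
  refine this.congr fun x => ?_
  simp [Function.comp, neg_sq]

lemma tendsto_sq_mul_exp {b : ℝ} (hb : 0 < b) {l : Filter ℝ}
    (hl : Tendsto (fun x : ℝ => Real.exp (-(b / 2) * x ^ 2)) l (nhds 0)) :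
    Tendsto (fun x : ℝ => x ^ 2 * Real.exp (-b * x ^ 2)) l (nhds 0) := by
  have hg := hl.const_mul (2 / b)
  rw [mul_zero] at hg
  refine squeeze_zero_norm (fun x => ?_) hg
  rw [Real.norm_eq_abs, abs_of_nonneg (by positivity)]
  exact sq_exp_le hb x

lemma tendsto_id_mul_exp {b : ℝ} (hb : 0 < b) {l : Filter ℝ}
    (hl1 : Tendsto (fun x : ℝ => Real.exp (-b * x ^ 2)) l (nhds 0))
    (hl2 : Tendsto (fun x : ℝ => Real.exp (-(b / 2) * x ^ 2)) l (nhds 0)) :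
    Tendsto (fun x : ℝ => x * Real.exp (-b * x ^ 2)) l (nhds 0) := by
  have hg := hl1.add (tendsto_sq_mul_exp hb hl2)
  rw [add_zero] at hg
  refine squeeze_zero_norm (fun x => ?_) hg
  rw [Real.norm_eq_abs, abs_mul, abs_of_nonneg (Real.exp_pos _).le]
  have h1 : |x| ≤ 1 + x ^ 2 := by nlinarith [sq_nonneg (|x| - 1), abs_nonneg x, sq_abs x]
  have h2 := mul_le_mul_of_nonneg_right h1 (Real.exp_pos (-b * x ^ 2)).le
  have h3 : (1 + x ^ 2) * Real.exp (-b * x ^ 2)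
      = Real.exp (-b * x ^ 2) + x ^ 2 * Real.exp (-b * x ^ 2) := by ring
  linarith

lemma gpdf_eq (s2 : ℝ) :
    gpdf s2 = fun x => (Real.sqrt (2 * Real.pi * s2))⁻¹ * Real.exp (-(2 * s2)⁻¹ * x ^ 2) := by
  funext x
  unfold gpdf
  congr 1
  ring

lemma inv_two_s2_pos {s2 : ℝ} (hs2 : 0 < s2) : 0 < (2 * s2)⁻¹ := by positivity

lemma integrable_gpdf {s2 : ℝ} (hs2 : 0 < s2) : Integrable (gpdf s2) := by
  rw [gpdf_eq]
  exact (integrable_exp_neg_mul_sq (inv_two_s2_pos hs2)).const_mul _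

lemma continuous_gpdf (s2 : ℝ) : Continuous (gpdf s2) := by
  rw [gpdf_eq]
  exact continuous_const.mul (Real.continuous_exp.comp (continuous_const.mul (continuous_pow 2)))

lemma integral_gpdf {s2 : ℝ} (hs2 : 0 < s2) : ∫ x : ℝ, gpdf s2 x = 1 := by
  rw [gpdf_eq, MeasureTheory.integral_const_mul, integral_gaussian]
  have h1 : Real.pi / (2 * s2)⁻¹ = 2 * Real.pi * s2 := by field_simp
  rw [h1]
  refine inv_mul_cancel₀ ?_
  positivity

lemma gpdf_pos {s2 : ℝ} (hs2 : 0 < s2) (x : ℝ) : 0 < gpdf s2 x := by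
  unfold gpdf
  have : 0 < Real.sqrt (2 * Real.pi * s2) := Real.sqrt_pos.2 (by positivity)
  positivity

lemma hasDerivAt_gpdf {s2 : ℝ} (hs2 : 0 < s2) (x : ℝ) :
    HasDerivAt (gpdf s2) (-(x / s2) * gpdf s2 x) x := by
  have h1 : HasDerivAt (fun y : ℝ => -(y ^ 2) / (2 * s2)) (-(2 * x ^ 1) / (2 * s2)) x :=
    ((hasDerivAt_pow 2 x).neg).div_const _
  have h2 := ((h1.exp).const_mul ((Real.sqrt (2 * Real.pi * s2))⁻¹))
  have h3 : (Real.sqrt (2 * Real.pi * s2))⁻¹ *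
      (Real.exp (-(x ^ 2) / (2 * s2)) * (-(2 * x ^ 1) / (2 * s2))) = -(x / s2) * gpdf s2 x := by
    unfold gpdf
    field_simp
  rw [h3] at h2
  exact h2

lemma tendsto_gpdf_atTop {s2 : ℝ} (hs2 : 0 < s2) :
    Tendsto (gpdf s2) atTop (nhds 0) := by
  rw [gpdf_eq]
  simpa using (tendsto_exp_neg_sq_atTop (inv_two_s2_pos hs2)).const_mul
    ((Real.sqrt (2 * Real.pi * s2))⁻¹)

lemma tendsto_gpdf_atBot {s2 : ℝ} (hs2 : 0 < s2) :
    Tendsto (gpdf s2) atBot (nhds 0) := by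
  rw [gpdf_eq]
  simpa using (tendsto_exp_neg_sq_atBot (inv_two_s2_pos hs2)).const_mul
    ((Real.sqrt (2 * Real.pi * s2))⁻¹)

lemma tendsto_id_mul_gpdf_atTop {s2 : ℝ} (hs2 : 0 < s2) :
    Tendsto (fun x => x * gpdf s2 x) atTop (nhds 0) := by
  have := (tendsto_id_mul_exp (inv_two_s2_pos hs2)
    (tendsto_exp_neg_sq_atTop (inv_two_s2_pos hs2))
    (tendsto_exp_neg_sq_atTop (half_pos (inv_two_s2_pos hs2)))).const_mul
    ((Real.sqrt (2 * Real.pi * s2))⁻¹)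
  rw [gpdf_eq]
  simp only [mul_zero] at this
  refine this.congr fun x => ?_
  ring

lemma tendsto_id_mul_gpdf_atBot {s2 : ℝ} (hs2 : 0 < s2) :
    Tendsto (fun x => x * gpdf s2 x) atBot (nhds 0) := by
  have := (tendsto_id_mul_exp (inv_two_s2_pos hs2)
    (tendsto_exp_neg_sq_atBot (inv_two_s2_pos hs2))
    (tendsto_exp_neg_sq_atBot (half_pos (inv_two_s2_pos hs2)))).const_mul
    ((Real.sqrt (2 * Real.pi * s2))⁻¹)
  rw [gpdf_eq]
  simp only [mul_zero] at this
  refine this.congr fun x => ?_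
  ring

lemma gcdf_eq {s2 : ℝ} (hs2 : 0 < s2) (x : ℝ) :
    gcdf s2 x = gcdf s2 0 + ∫ t in (0:ℝ)..x, gpdf s2 t := by
  have h := intervalIntegral.integral_Iic_sub_Iic
    ((integrable_gpdf hs2).integrableOn (s := Set.Iic 0))
    ((integrable_gpdf hs2).integrableOn (s := Set.Iic x))
  unfold gcdf
  linarith [h]

lemma hasDerivAt_gcdf {s2 : ℝ} (hs2 : 0 < s2) (x : ℝ) :
    HasDerivAt (gcdf s2) (gpdf s2 x) x := by
  have h := intervalIntegral.integral_hasDerivAt_right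
    ((integrable_gpdf hs2).intervalIntegrable (a := 0) (b := x))
    ((continuous_gpdf s2).stronglyMeasurableAtFilter volume (nhds x))
    ((continuous_gpdf s2).continuousAt)
  have h2 := h.const_add (gcdf s2 0)
  have h3 : (fun u => gcdf s2 0 + ∫ t in (0:ℝ)..u, gpdf s2 t) = gcdf s2 :=
    funext fun u => (gcdf_eq hs2 u).symm
  rwa [h3] at h2

lemma tendsto_gcdf_atBot {s2 : ℝ} (hs2 : 0 < s2) :
    Tendsto (gcdf s2) atBot (nhds 0) := by
  have h := intervalIntegral_tendsto_integral_Iic (0:ℝ)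
    ((integrable_gpdf hs2).integrableOn) tendsto_id
  have h2 : Tendsto (fun a : ℝ => gcdf s2 0 - ∫ x in a..0, gpdf s2 x) atBot
      (nhds (gcdf s2 0 - ∫ x in Set.Iic 0, gpdf s2 x)) := tendsto_const_nhds.sub h
  have h3 : ∀ a : ℝ, gcdf s2 0 - ∫ x in a..0, gpdf s2 x = gcdf s2 a := by
    intro a
    have := gcdf_eq hs2 a
    have h4 : ∫ x in a..(0:ℝ), gpdf s2 x = -∫ x in (0:ℝ)..a, gpdf s2 x :=
      (intervalIntegral.integral_symm 0 a)
    rw [h4]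
    linarith
  have h5 : gcdf s2 0 - ∫ x in Set.Iic 0, gpdf s2 x = 0 := sub_self _
  rw [h5] at h2
  exact h2.congr h3

lemma tendsto_gcdf_atTop {s2 : ℝ} (hs2 : 0 < s2) :
    Tendsto (gcdf s2) atTop (nhds 1) := by
  have h := intervalIntegral_tendsto_integral_Ioi (0:ℝ)
    ((integrable_gpdf hs2).integrableOn) tendsto_id
  have h2 : Tendsto (fun b : ℝ => gcdf s2 0 + ∫ x in (0:ℝ)..b, gpdf s2 x) atTop
      (nhds (gcdf s2 0 + ∫ x in Set.Ioi 0, gpdf s2 x)) := tendsto_const_nhds.add h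
  have h3 : gcdf s2 0 + ∫ x in Set.Ioi 0, gpdf s2 x = 1 := by
    show (∫ t in Set.Iic (0:ℝ), gpdf s2 t) + ∫ x in Set.Ioi (0:ℝ), gpdf s2 x = 1
    rw [intervalIntegral.integral_Iic_add_Ioi ((integrable_gpdf hs2).integrableOn)
      ((integrable_gpdf hs2).integrableOn)]
    exact integral_gpdf hs2
  rw [h3] at h2
  exact h2.congr fun b => (gcdf_eq hs2 b).symm

lemma integrable_sq_mul_gpdf {s2 : ℝ} (hs2 : 0 < s2) (ξ : ℝ) :
    Integrable (fun w => (ξ - w) ^ 2 * gpdf s2 w) := by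
  have hb := inv_two_s2_pos hs2
  have heq : (fun w => (ξ - w) ^ 2 * gpdf s2 w)
      = fun w => (Real.sqrt (2 * Real.pi * s2))⁻¹ *
        (ξ ^ 2 * Real.exp (-(2 * s2)⁻¹ * w ^ 2)
          + (-2 * ξ) * (w * Real.exp (-(2 * s2)⁻¹ * w ^ 2))
          + w ^ 2 * Real.exp (-(2 * s2)⁻¹ * w ^ 2)) := by
    funext w
    rw [gpdf_eq]
    ring
  rw [heq]
  exact ((((integrable_exp_neg_mul_sq hb).const_mul (ξ ^ 2)).add
    ((integrable_id_mul_exp hb).const_mul (-2 * ξ))).add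
    (integrable_sq_mul_exp hb)).const_mul _

/-- For `W ~ N(0, σ²)` with `σ² > 0` and `τ ∈ (0,1)`, for any real `ξ`,
`E[ρ_τ(ξ − W)] = (2τ−1)ξ²Φ(ξ;0,σ²) + (2τ−1)σ² ξ φ(ξ;0,σ²)
  + (2τ−1)σ² Φ(ξ;0,σ²) + (1−τ)(ξ² + σ²)`. -/
theorem expectile_loss_gaussian (τ : ℝ) (hτ : τ ∈ Set.Ioo (0:ℝ) 1) (s2 : ℝ) (hs2 : 0 < s2)
    (ξ : ℝ) :
    ∫ w : ℝ, expectileLoss τ (ξ - w) * gpdf s2 w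
      = (2 * τ - 1) * ξ ^ 2 * gcdf s2 ξ + (2 * τ - 1) * s2 * ξ * gpdf s2 ξ
        + (2 * τ - 1) * s2 * gcdf s2 ξ + (1 - τ) * (ξ ^ 2 + s2) := by
  set G : ℝ → ℝ := fun w => ξ ^ 2 * gcdf s2 w + 2 * ξ * s2 * gpdf s2 w + s2 * gcdf s2 w
    - s2 * (w * gpdf s2 w) with hGdef
  have hG : ∀ w : ℝ, HasDerivAt G ((ξ - w) ^ 2 * gpdf s2 w) w := by
    intro w
    have h1 := (hasDerivAt_gcdf hs2 w).const_mul (ξ ^ 2)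
    have h2 := (hasDerivAt_gpdf hs2 w).const_mul (2 * ξ * s2)
    have h3 := (hasDerivAt_gcdf hs2 w).const_mul s2
    have h4 := (((hasDerivAt_id w).mul (hasDerivAt_gpdf hs2 w)).const_mul s2)
    have h5 := ((h1.add h2).add h3).sub h4
    refine h5.congr_deriv ?_
    simp only [id]
    field_simp
    ring
  have hGbot : Tendsto G atBot (nhds 0) := by
    have := ((((tendsto_gcdf_atBot hs2).const_mul (ξ ^ 2)).add
      ((tendsto_gpdf_atBot hs2).const_mul (2 * ξ * s2))).add
      ((tendsto_gcdf_atBot hs2).const_mul s2)).sub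
      ((tendsto_id_mul_gpdf_atBot hs2).const_mul s2)
    simpa using this
  have hGtop : Tendsto G atTop (nhds (ξ ^ 2 + s2)) := by
    have := ((((tendsto_gcdf_atTop hs2).const_mul (ξ ^ 2)).add
      ((tendsto_gpdf_atTop hs2).const_mul (2 * ξ * s2))).add
      ((tendsto_gcdf_atTop hs2).const_mul s2)).sub
      ((tendsto_id_mul_gpdf_atTop hs2).const_mul s2)
    have h0 : ξ ^ 2 * 1 + 2 * ξ * s2 * 0 + s2 * 1 - s2 * 0 = ξ ^ 2 + s2 := by ring
    rw [h0] at this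
    exact this
  have hint := integrable_sq_mul_gpdf hs2 ξ
  have hI1 : ∫ w in Set.Iic ξ, (ξ - w) ^ 2 * gpdf s2 w = G ξ - 0 :=
    integral_Iic_of_hasDerivAt_of_tendsto' (fun x _ => hG x) hint.integrableOn hGbot
  have hI2 : ∫ w in Set.Ioi ξ, (ξ - w) ^ 2 * gpdf s2 w = (ξ ^ 2 + s2) - G ξ :=
    integral_Ioi_of_hasDerivAt_of_tendsto' (fun x _ => hG x) hint.integrableOn hGtop
  have hEqIic : Set.EqOn (fun w => τ * ((ξ - w) ^ 2 * gpdf s2 w))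
      (fun w => expectileLoss τ (ξ - w) * gpdf s2 w) (Set.Iic ξ) := by
    intro w hw
    have : ¬ (ξ - w < 0) := not_lt.2 (sub_nonneg.2 hw)
    simp only [expectileLoss, if_neg this]
    ring
  have hEqIoi : Set.EqOn (fun w => (1 - τ) * ((ξ - w) ^ 2 * gpdf s2 w))
      (fun w => expectileLoss τ (ξ - w) * gpdf s2 w) (Set.Ioi ξ) := by
    intro w hw
    have : ξ - w < 0 := sub_neg.2 hw
    simp only [expectileLoss, if_pos this]
    ring
  have hfIic : IntegrableOn (fun w => expectileLoss τ (ξ - w) * gpdf s2 w) (Set.Iic ξ) :=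
    ((hint.const_mul τ).integrableOn).congr_fun hEqIic measurableSet_Iic
  have hfIoi : IntegrableOn (fun w => expectileLoss τ (ξ - w) * gpdf s2 w) (Set.Ioi ξ) :=
    ((hint.const_mul (1 - τ)).integrableOn).congr_fun hEqIoi measurableSet_Ioi
  have hsplit := intervalIntegral.integral_Iic_add_Ioi hfIic hfIoi
  rw [← hsplit]
  rw [← setIntegral_congr_fun measurableSet_Iic hEqIic,
    ← setIntegral_congr_fun measurableSet_Ioi hEqIoi]
  rw [MeasureTheory.integral_const_mul, MeasureTheory.integral_const_mul, hI1, hI2, hGdef]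
  ring
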